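/- arXiv:2309.09913 — 2 statements merged into one kernel-verified Lean document; each statement's English description precedes it below -/
import Mathlib

section
/- (Wielandt–Hoffman) Let A and A+E be symmetric n×n real matrices with eigenvalues λ₁(A) ≥ ⋯ ≥ λ_n(A) and λ₁(A+E) ≥ ⋯ ≥ λ_n(A+E), respectively. Then Σ_{i=1}^n (λ_i(A+E) - λ_i(A))² ≤ ‖E‖_F². -/
open Finset Matrix


private lemma abel_repr (b : ℕ → ℝ) (m : ℕ) : ∀ j ≤ m,
    b j = b m + ∑ k ∈ range m, if j ≤ k then b k - b (k+1) else 0 := by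
  induction m with
  | zero => intro j hj; interval_cases j; simp
  | succ m ih =>
    intro j hj
    rw [Finset.sum_range_succ]
    by_cases hjm : j ≤ m
    · rw [if_pos hjm]
      have := ih j hjm
      linarith
    · have : j = m + 1 := by omega
      subst this
      rw [if_neg (by omega)]
      have : ∀ k ∈ range (m+1), (if m+1 ≤ k then b k - b (k+1) else 0) = 0 := by
        intro k hk; rw [if_neg]; simp at hk; omega
      have h2 : ∀ k ∈ range m, (if m+1 ≤ k then b k - b (k+1) else 0) = 0 := by
        intro k hk; rw [if_neg]; simp at hk; omega
      rw [Finset.sum_congr rfl h2]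
      simp

private lemma majorize (n : ℕ) (f b : ℕ → ℝ)
    (hb : ∀ m, m + 1 < n → b (m+1) ≤ b m)
    (hF : ∀ m, m < n → 0 ≤ ∑ j ∈ range (m+1), f j)
    (htot : ∑ j ∈ range n, f j = 0) :
    0 ≤ ∑ j ∈ range n, f j * b j := by
  rcases Nat.eq_zero_or_pos n with h | h
  · simp [h]
  have hrepr : ∀ j ∈ range n, f j * b j =
      f j * b (n-1) + ∑ k ∈ range (n-1), (if j ≤ k then f j * (b k - b (k+1)) else 0) := by
    intro j hj
    have hj' : j ≤ n - 1 := by simp at hj; omega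
    conv_lhs => rw [abel_repr b (n-1) j hj']
    rw [mul_add, Finset.mul_sum]
    simp [mul_ite]
  rw [Finset.sum_congr rfl hrepr, Finset.sum_add_distrib]
  have h1 : ∑ j ∈ range n, f j * b (n-1) = 0 := by
    rw [← Finset.sum_mul, htot, zero_mul]
  rw [h1, zero_add, Finset.sum_comm]
  apply Finset.sum_nonneg
  intro k hk
  simp only [Finset.mem_range] at hk
  have : ∑ j ∈ range n, (if j ≤ k then f j * (b k - b (k+1)) else 0)
      = (∑ j ∈ range (k+1), f j) * (b k - b (k+1)) := by
    rw [Finset.sum_mul, ← Finset.sum_filter]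
    apply Finset.sum_congr
    · ext j; simp only [Finset.mem_filter, Finset.mem_range, Nat.lt_succ_iff]; omega
    · intros; rfl
  rw [this]
  exact mul_nonneg (hF k (by omega)) (by linarith [hb k (by omega)])


private lemma capped (n m : ℕ) (hm : m < n) (a t : ℕ → ℝ)
    (ha : ∀ i j, i ≤ j → j < n → a j ≤ a i)
    (ht0 : ∀ i, i < n → 0 ≤ t i) (ht1 : ∀ i, i < n → t i ≤ 1)
    (htot : ∑ i ∈ range n, t i = m + 1) :
    ∑ i ∈ range n, a i * t i ≤ ∑ i ∈ range (m+1), a i := by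
  have key : ∀ i ∈ range n, a i * t i ≤ a m * t i + (if i ≤ m then a i - a m else 0) := by
    intro i hi
    simp only [Finset.mem_range] at hi
    by_cases him : i ≤ m
    · rw [if_pos him]
      have h1 : a m ≤ a i := ha i m him hm
      have h2 : t i ≤ 1 := ht1 i hi
      nlinarith
    · rw [if_neg him]
      have h1 : a i ≤ a m := ha m i (by omega) hi
      have h2 : 0 ≤ t i := ht0 i hi
      nlinarith
  calc ∑ i ∈ range n, a i * t i
      ≤ ∑ i ∈ range n, (a m * t i + (if i ≤ m then a i - a m else 0)) :=
        Finset.sum_le_sum key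
    _ = a m * (m+1) + ∑ i ∈ range n, (if i ≤ m then a i - a m else 0) := by
        rw [Finset.sum_add_distrib, ← Finset.mul_sum, htot]
    _ = a m * (m+1) + ∑ i ∈ range (m+1), (a i - a m) := by
        congr 1
        rw [← Finset.sum_filter]
        apply Finset.sum_congr
        · ext i; simp only [Finset.mem_filter, Finset.mem_range, Nat.lt_succ_iff]; omega
        · intros; rfl
    _ = ∑ i ∈ range (m+1), a i := by
        rw [Finset.sum_sub_distrib]
        simp
        ring


private lemma ds_main (n : ℕ) (a b : ℕ → ℝ) (S : ℕ → ℕ → ℝ)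
    (ha : ∀ i j, i ≤ j → j < n → a j ≤ a i)
    (hb : ∀ i j, i ≤ j → j < n → b j ≤ b i)
    (hS0 : ∀ i j, i < n → j < n → 0 ≤ S i j)
    (hrow : ∀ i, i < n → ∑ j ∈ range n, S i j = 1)
    (hcol : ∀ j, j < n → ∑ i ∈ range n, S i j = 1) :
    ∑ i ∈ range n, ∑ j ∈ range n, S i j * a i * b j ≤ ∑ i ∈ range n, a i * b i := by
  set w : ℕ → ℝ := fun j => ∑ i ∈ range n, S i j * a i with hw
  have hL : ∑ i ∈ range n, ∑ j ∈ range n, S i j * a i * b j = ∑ j ∈ range n, w j * b j := by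
    rw [Finset.sum_comm]
    apply Finset.sum_congr rfl
    intro j _
    rw [hw, Finset.sum_mul]
  rw [hL]
  have hwpart : ∀ m, m < n → ∑ j ∈ range (m+1), w j ≤ ∑ j ∈ range (m+1), a j := by
    intro m hm
    have hswap : ∑ j ∈ range (m+1), w j = ∑ i ∈ range n, a i * (∑ j ∈ range (m+1), S i j) := by
      rw [Finset.sum_comm]
      apply Finset.sum_congr rfl
      intro i _
      rw [Finset.mul_sum]
      apply Finset.sum_congr rfl
      intro j hj
      ring
    rw [hswap]
    apply capped n m hm a _ ha
    · intro i hi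
      exact Finset.sum_nonneg fun j hj => hS0 i j hi (by simp at hj; omega)
    · intro i hi
      calc ∑ j ∈ range (m+1), S i j ≤ ∑ j ∈ range n, S i j := by
            apply Finset.sum_le_sum_of_subset_of_nonneg
            · exact Finset.range_subset_range.mpr (by omega)
            · intro j hj _; exact hS0 i j hi (by simp at hj; omega)
        _ = 1 := hrow i hi
    · rw [Finset.sum_comm]
      have : ∀ j ∈ range (m+1), ∑ i ∈ range n, S i j = 1 := by
        intro j hj
        simp only [Finset.mem_range] at hj
        exact hcol j (by omega)
      rw [Finset.sum_congr rfl this]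
      simp
  have hwtot : ∑ j ∈ range n, w j = ∑ j ∈ range n, a j := by
    rw [Finset.sum_comm]
    calc ∑ i ∈ range n, ∑ j ∈ range n, S i j * a i
        = ∑ i ∈ range n, a i * ∑ j ∈ range n, S i j := by
          apply Finset.sum_congr rfl; intro i _; rw [Finset.mul_sum]; apply Finset.sum_congr rfl; intros; ring
      _ = ∑ i ∈ range n, a i := by
          apply Finset.sum_congr rfl; intro i hi; rw [hrow i (by simp at hi; omega), mul_one]
  have := majorize n (fun j => a j - w j) b
    (fun m hm => hb m (m+1) (by omega) hm)
    (by intro m hm; rw [Finset.sum_sub_distrib]; linarith [hwpart m hm])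
    (by rw [Finset.sum_sub_distrib, hwtot]; ring)
  have hexp : ∑ j ∈ range n, (a j - w j) * b j
      = ∑ j ∈ range n, a j * b j - ∑ j ∈ range n, w j * b j := by
    rw [← Finset.sum_sub_distrib]
    apply Finset.sum_congr rfl; intros; ring
  rw [hexp] at this
  linarith

private lemma ds_fin (n : ℕ) (a b : Fin n → ℝ) (S : Fin n → Fin n → ℝ)
    (ha : Antitone a) (hb : Antitone b) (hS0 : ∀ i j, 0 ≤ S i j)
    (hrow : ∀ i, ∑ j, S i j = 1) (hcol : ∀ j, ∑ i, S i j = 1) :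
    ∑ i, ∑ j, S i j * a i * b j ≤ ∑ i, a i * b i := by
  classical
  set a' : ℕ → ℝ := fun i => if h : i < n then a ⟨i, h⟩ else 0 with ha'
  set b' : ℕ → ℝ := fun i => if h : i < n then b ⟨i, h⟩ else 0 with hb'
  set S' : ℕ → ℕ → ℝ := fun i j => if h : i < n ∧ j < n then S ⟨i, h.1⟩ ⟨j, h.2⟩ else 0 with hS'
  have h1 : ∀ (f : Fin n → ℝ) (f' : ℕ → ℝ), (∀ i : Fin n, f' i = f i) →
      ∑ i, f i = ∑ i ∈ range n, f' i := by
    intro f f' hf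
    rw [Finset.sum_range fun i => f' i]
    exact (Fintype.sum_congr _ _ fun i => by rw [hf i]).symm
  have key := ds_main n a' b' S'
    (fun i j hij hj => by
      simp only [ha']
      rw [dif_pos (by omega : i < n), dif_pos hj]
      exact ha (by exact_mod_cast hij))
    (fun i j hij hj => by
      simp only [hb']
      rw [dif_pos (by omega : i < n), dif_pos hj]
      exact hb (by exact_mod_cast hij))
    (fun i j hi hj => by
      simp only [hS']
      rw [dif_pos ⟨hi, hj⟩]; exact hS0 _ _)
    (fun i hi => by
      have : ∑ j ∈ range n, S' i j = ∑ j : Fin n, S ⟨i, hi⟩ j := by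
        rw [Finset.sum_range fun j => S' i j]
        apply Fintype.sum_congr
        intro j
        simp only [hS']
        rw [dif_pos ⟨hi, j.isLt⟩]
      rw [this, hrow])
    (fun j hj => by
      have : ∑ i ∈ range n, S' i j = ∑ i : Fin n, S i ⟨j, hj⟩ := by
        rw [Finset.sum_range fun i => S' i j]
        apply Fintype.sum_congr
        intro i
        simp only [hS']
        rw [dif_pos ⟨i.isLt, hj⟩]
      rw [this, hcol])
  have e1 : ∑ i, ∑ j, S i j * a i * b j = ∑ i ∈ range n, ∑ j ∈ range n, S' i j * a' i * b' j := by
    apply h1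
    intro i
    rw [Finset.sum_range fun j => S' i.val j * a' i.val * b' j]
    apply Fintype.sum_congr
    intro j
    simp only [hS', ha', hb']
    rw [dif_pos ⟨i.isLt, j.isLt⟩, dif_pos i.isLt, dif_pos j.isLt]
  have e2 : ∑ i, a i * b i = ∑ i ∈ range n, a' i * b' i := by
    apply h1
    intro i
    simp only [ha', hb']
    rw [dif_pos i.isLt, dif_pos i.isLt]
  rw [e1, e2]
  exact key



/-- Wielandt–Hoffman inequality: if `A` and `A + E` are symmetric `n × n` real
matrices with eigenvalues `lamA` and `lamB` listed in nonincreasing order (with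
multiplicity), then `∑ᵢ (lamB i - lamA i)² ≤ ‖E‖_F²`. -/
theorem stmt_12 (n : ℕ) (A E : Matrix (Fin n) (Fin n) ℝ)
    (hA : A.IsHermitian) (hAE : (A + E).IsHermitian)
    (lamA lamB : Fin n → ℝ) (hmonoA : Antitone lamA) (hmonoB : Antitone lamB)
    (eA : Fin n ≃ Fin n) (eB : Fin n ≃ Fin n)
    (hlamA : lamA = hA.eigenvalues ∘ eA) (hlamB : lamB = hAE.eigenvalues ∘ eB) :
    ∑ i, (lamB i - lamA i) ^ 2 ≤ ∑ i, ∑ j, (E i j) ^ 2 := by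
  classical
  set B := A + E with hB
  set lA : Fin n → ℝ := hA.eigenvalues with hlA
  set lB : Fin n → ℝ := hAE.eigenvalues with hlB
  set U : Matrix (Fin n) (Fin n) ℝ := (hA.eigenvectorUnitary : Matrix (Fin n) (Fin n) ℝ) with hU
  set V : Matrix (Fin n) (Fin n) ℝ := (hAE.eigenvectorUnitary : Matrix (Fin n) (Fin n) ℝ) with hV
  have hUU : star U * U = 1 := Unitary.coe_star_mul_self hA.eigenvectorUnitary
  have hUU' : U * star U = 1 := Unitary.coe_mul_star_self hA.eigenvectorUnitary
  have hVV : star V * V = 1 := Unitary.coe_star_mul_self hAE.eigenvectorUnitary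
  have hVV' : V * star V = 1 := Unitary.coe_mul_star_self hAE.eigenvectorUnitary
  have hAspec : A = U * diagonal lA * star U := by
    have := hA.spectral_theorem
    rwa [RCLike.ofReal_real_eq_id, Function.id_comp] at this
  have hBspec : B = V * diagonal lB * star V := by
    have := hAE.spectral_theorem
    rwa [RCLike.ofReal_real_eq_id, Function.id_comp] at this
  set W : Matrix (Fin n) (Fin n) ℝ := star V * U with hW
  have hWW : W * star W = 1 := by
    rw [hW, StarMul.star_mul, star_star, Matrix.mul_assoc, ← Matrix.mul_assoc U, hUU',
      Matrix.one_mul, hVV]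
  have hWW' : star W * W = 1 := by
    rw [hW, StarMul.star_mul, star_star, Matrix.mul_assoc, ← Matrix.mul_assoc V, hVV',
      Matrix.one_mul, hUU]
  have conjU : ∀ M N : Matrix (Fin n) (Fin n) ℝ,
      (U * M * star U) * (U * N * star U) = U * (M * N) * star U := by
    intro M N
    have h : star U * (U * (N * star U)) = N * star U := by
      rw [← Matrix.mul_assoc, hUU, Matrix.one_mul]
    simp only [Matrix.mul_assoc, h]
  have conjV : ∀ M N : Matrix (Fin n) (Fin n) ℝ,
      (V * M * star V) * (V * N * star V) = V * (M * N) * star V := by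
    intro M N
    have h : star V * (V * (N * star V)) = N * star V := by
      rw [← Matrix.mul_assoc, hVV, Matrix.one_mul]
    simp only [Matrix.mul_assoc, h]
  have trconjU : ∀ M : Matrix (Fin n) (Fin n) ℝ, trace (U * M * star U) = trace M := by
    intro M
    rw [Matrix.trace_mul_cycle, hUU, Matrix.one_mul]
  -- trace of A*A
  have trAA : trace (A * A) = ∑ i, lA i ^ 2 := by
    rw [hAspec, conjU, trconjU, diagonal_mul_diagonal, trace_diagonal]
    exact Finset.sum_congr rfl fun i _ => (sq (lA i)).symm
  have trBB : trace (B * B) = ∑ i, lB i ^ 2 := by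
    rw [hBspec, conjV, Matrix.trace_mul_cycle, hVV, Matrix.one_mul,
      diagonal_mul_diagonal, trace_diagonal]
    exact Finset.sum_congr rfl fun i _ => (sq (lB i)).symm
  -- trace of A*B
  have trAB : trace (A * B) = ∑ j, ∑ i, W i j ^ 2 * lB i * lA j := by
    rw [hAspec, hBspec]
    have e1 : U * diagonal lA * star U * (V * diagonal lB * star V)
        = U * (diagonal lA * (star W * diagonal lB * W)) * star U := by
      rw [hW, StarMul.star_mul, star_star]
      simp only [Matrix.mul_assoc]
      rw [hUU', Matrix.mul_one]
    rw [e1, trconjU, Matrix.trace]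
    apply Finset.sum_congr rfl
    intro j _
    simp only [Matrix.diag_apply, Matrix.mul_apply, Matrix.diagonal_apply,
      Matrix.star_apply, star_trivial, mul_ite, mul_zero, ite_mul, zero_mul,
      Finset.sum_ite_eq, Finset.sum_ite_eq', Finset.mem_univ, if_true]
    rw [Finset.mul_sum]
    apply Finset.sum_congr rfl
    intro i _
    ring
    -- E is symmetric
  have hE : E.IsHermitian := by
    have h := hAE.sub hA
    have : A + E - A = E := by abel
    rwa [this] at h
  have hEsymm : ∀ i j, E j i = E i j := by
    intro i j
    have h := hE.apply i j
    simpa using h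
  have trEE : trace (E * E) = ∑ i, ∑ j, E i j ^ 2 := by
    rw [Matrix.trace]
    apply Finset.sum_congr rfl
    intro i _
    rw [Matrix.diag_apply, Matrix.mul_apply]
    apply Finset.sum_congr rfl
    intro j _
    rw [hEsymm i j]
    ring
  have hEexp : E * E = B * B - A * B - B * A + A * A := by
    have hE' : E = B - A := by rw [hB]; abel
    rw [hE']
    noncomm_ring
  have trE2 : trace (E * E) = trace (B * B) - 2 * trace (A * B) + trace (A * A) := by
    rw [hEexp, Matrix.trace_add, Matrix.trace_sub, Matrix.trace_sub,
      Matrix.trace_mul_comm B A]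
    ring
  -- doubly stochastic
  have hrowsum : ∀ i, ∑ j, W i j ^ 2 = 1 := by
    intro i
    have h := congrArg (fun M => M i i) hWW
    simp only [Matrix.mul_apply, Matrix.star_apply, star_trivial, Matrix.one_apply_eq] at h
    rw [← h]
    apply Finset.sum_congr rfl
    intros; ring
  have hcolsum : ∀ j, ∑ i, W i j ^ 2 = 1 := by
    intro j
    have h := congrArg (fun M => M j j) hWW'
    simp only [Matrix.mul_apply, Matrix.star_apply, star_trivial, Matrix.one_apply_eq] at h
    rw [← h]
    apply Finset.sum_congr rfl
    intros; ring
  set S : Fin n → Fin n → ℝ := fun i j => W (eB i) (eA j) ^ 2 with hS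
  have hds := ds_fin n lamB lamA S hmonoB hmonoA (fun i j => sq_nonneg _)
    (fun i => (Equiv.sum_comp eA (fun j => W (eB i) j ^ 2)).trans (hrowsum (eB i)))
    (fun j => (Equiv.sum_comp eB (fun i => W i (eA j) ^ 2)).trans (hcolsum (eA j)))
  have hSsum : ∑ i, ∑ j, S i j * lamB i * lamA j = trace (A * B) := by
    rw [trAB]
    calc ∑ i, ∑ j, S i j * lamB i * lamA j
        = ∑ i, ∑ j, W (eB i) (eA j) ^ 2 * lB (eB i) * lA (eA j) := by
          apply Finset.sum_congr rfl; intro i _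
          apply Finset.sum_congr rfl; intro j _
          rw [hlamB, hlamA]; rfl
      _ = ∑ i, ∑ j, W (eB i) j ^ 2 * lB (eB i) * lA j := by
          apply Finset.sum_congr rfl; intro i _
          exact Equiv.sum_comp eA (fun j => W (eB i) j ^ 2 * lB (eB i) * lA j)
      _ = ∑ i, ∑ j, W i j ^ 2 * lB i * lA j :=
          Equiv.sum_comp eB (fun i => ∑ j, W i j ^ 2 * lB i * lA j)
      _ = ∑ j, ∑ i, W i j ^ 2 * lB i * lA j := Finset.sum_comm
  have hsumB2 : ∑ i, lamB i ^ 2 = ∑ i, lB i ^ 2 := by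
    rw [hlamB]
    exact Equiv.sum_comp eB (fun i => lB i ^ 2)
  have hsumA2 : ∑ i, lamA i ^ 2 = ∑ i, lA i ^ 2 := by
    rw [hlamA]
    exact Equiv.sum_comp eA (fun i => lA i ^ 2)
  have expand : ∑ i, (lamB i - lamA i) ^ 2
      = ∑ i, lamB i ^ 2 + ∑ i, lamA i ^ 2 - 2 * ∑ i, lamB i * lamA i := by
    rw [← Finset.sum_add_distrib, Finset.mul_sum, ← Finset.sum_sub_distrib]
    apply Finset.sum_congr rfl
    intros; ring
  have final : ∑ i, ∑ j, E i j ^ 2 = ∑ i, lB i ^ 2 + ∑ i, lA i ^ 2 - 2 * trace (A * B) := by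
    rw [← trEE, trE2, trAA, trBB]
    ring
  rw [expand, final, hsumA2, hsumB2, ← hSsum]
  linarith [hds]
end

section
/- Let Φ be a conjunction of M = α·n independent uniformly random k-clauses, and σ⁽¹⁾,…,σ⁽ᵐ⁾ ∈ {0,1}ⁿ fixed assignments with pairwise Hamming distances at least (β-η)n. Then P[Φ(σ⁽ᵗ⁾)=1 for all t] ≤ (1 - m·2^{-k} + C(m,2)·(1-β+η)^k·2^{-k})^{αn}, where C(m,2) = m(m-1)/2. -/
open Finset

lemma card_pi_filter {ι X : Type*} [Fintype ι] [DecidableEq ι] [Fintype X] [DecidableEq X]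
    {F : Fintype (ι → X)} (Q : X → Prop) [DecidablePred Q]
    {h2 : DecidablePred (fun c : ι → X => ∀ j, Q (c j))} :
    (@Finset.filter _ _ h2 (@Finset.univ _ F)).card
      = (univ.filter Q).card ^ Fintype.card ι := by
  have hF : F = Pi.instFintype := Subsingleton.elim _ _
  subst hF
  have hh : h2 = fun c : ι → X => Fintype.decidableForallFintype :=
    Subsingleton.elim _ _
  subst hh
  rw [← Fintype.card_subtype, ← Fintype.card_subtype,
    Fintype.card_congr (Equiv.subtypePiEquivPi (p := fun _ : ι => Q)),
    Fintype.card_pi]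
  simp

lemma bonferroni {ι W : Type*} [DecidableEq ι] [DecidableEq W] (A : ι → Finset W)
    (s : Finset ι) :
    ∑ t ∈ s, ((A t).card : ℝ)
      ≤ ((s.biUnion A).card : ℝ) + (∑ p ∈ s.offDiag, ((A p.1 ∩ A p.2).card : ℝ)) / 2 := by
  induction s using Finset.induction_on with
  | empty => simp
  | @insert a s ha ih =>
    rw [Finset.sum_insert ha, Finset.offDiag_insert ha, Finset.biUnion_insert]
    have hd1 : Disjoint (s.offDiag ∪ {a} ×ˢ s) (s ×ˢ {a}) := by
      simp only [Finset.disjoint_left]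
      rintro ⟨x, y⟩ hx hy
      simp only [Finset.mem_product, Finset.mem_singleton, Finset.mem_union,
        Finset.mem_offDiag] at hx hy
      rcases hx with h | h
      · exact ha (hy.2 ▸ h.2.1)
      · exact ha (hy.2 ▸ h.2)
    have hd2 : Disjoint s.offDiag ({a} ×ˢ s) := by
      simp only [Finset.disjoint_left]
      rintro ⟨x, y⟩ hx hy
      simp only [Finset.mem_product, Finset.mem_singleton, Finset.mem_offDiag] at hx hy
      exact ha (hy.1 ▸ hx.1)
    rw [Finset.sum_union hd1, Finset.sum_union hd2]
    have e1 : ∑ p ∈ {a} ×ˢ s, ((A p.1 ∩ A p.2).card : ℝ)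
        = ∑ t ∈ s, ((A a ∩ A t).card : ℝ) := by
      rw [Finset.singleton_product, Finset.sum_map]; rfl
    have e2 : ∑ p ∈ s ×ˢ {a}, ((A p.1 ∩ A p.2).card : ℝ)
        = ∑ t ∈ s, ((A a ∩ A t).card : ℝ) := by
      rw [Finset.product_singleton, Finset.sum_map]
      simp [Finset.inter_comm]
    rw [e1, e2]
    have key : ((A a).card : ℝ)
        ≤ ((A a ∪ s.biUnion A).card : ℝ) - ((s.biUnion A).card : ℝ)
          + ∑ t ∈ s, ((A a ∩ A t).card : ℝ) := by
      have h1 : ((A a ∪ s.biUnion A).card : ℝ) + ((A a ∩ s.biUnion A).card : ℝ)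
          = (A a).card + ((s.biUnion A).card : ℝ) := by
        exact_mod_cast congrArg (Nat.cast (R := ℝ))
          (Finset.card_union_add_card_inter (A a) (s.biUnion A))
      have h2 : ((A a ∩ s.biUnion A).card : ℝ) ≤ ∑ t ∈ s, ((A a ∩ A t).card : ℝ) := by
        have : A a ∩ s.biUnion A = s.biUnion (fun t => A a ∩ A t) := by
          ext x; simp [Finset.mem_biUnion]; tauto
        rw [this]
        exact_mod_cast Finset.card_biUnion_le
      linarith
    linarith

/-- Let `Φ` be a conjunction of `M = α n` independent uniformly random
`k`-clauses (a clause is a `k`-tuple of literals; a literal `(i,b)` is satisfied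
by `σ` iff `σ i = b`; `Φ(σ)=1` iff every clause contains a satisfied literal),
and let `σ⁽¹⁾,…,σ⁽ᵐ⁾ ∈ {0,1}ⁿ` have pairwise Hamming distances at least
`(β-η)n`. Then (probability written as the counting fraction over the uniform
formula space)
`P[Φ(σ⁽ᵗ⁾)=1 ∀t] ≤ (1 - m 2⁻ᵏ + (m(m-1)/2)(1-β+η)ᵏ 2⁻ᵏ)^{αn}`. -/
theorem stmt_19 (n k m M : ℕ) (hn : 0 < n) (α β η : ℝ)
    (hη : 0 < η) (hηβ : η < β) (hβ : β < 1)
    (hM : (M : ℝ) = α * n)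
    (σ : Fin m → Fin n → Bool)
    (hdist : ∀ t l : Fin m, t ≠ l →
      (β - η) * n ≤ (hammingDist (σ t) (σ l) : ℝ)) :
    ((Finset.univ.filter (fun c : Fin M → Fin k → Fin n × Bool =>
        ∀ (t : Fin m) (j : Fin M), ∃ l : Fin k,
          (σ t) ((c j l).1) = ((c j l).2))).card : ℝ) /
      ((2 * n : ℝ)) ^ (k * M) ≤
      (1 - m * (2 : ℝ) ^ (-(k : ℤ)) +
          (m * (m - 1) / 2) * (1 - β + η) ^ k * (2 : ℝ) ^ (-(k : ℤ))) ^ M := by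
  set Q : (Fin k → Fin n × Bool) → Prop :=
    fun w => ∀ t : Fin m, ∃ l, σ t (w l).1 = (w l).2 with hQdef
  have hfilter : (univ.filter (fun c : Fin M → Fin k → Fin n × Bool =>
        ∀ (t : Fin m) (j : Fin M), ∃ l : Fin k, (σ t) ((c j l).1) = ((c j l).2)))
      = univ.filter (fun c => ∀ j, Q (c j)) := by
    apply filter_congr
    intro c _
    simp only [hQdef]
    exact forall_comm
  rw [hfilter]
  rw [card_pi_filter Q, Fintype.card_fin]
  rw [pow_mul, Nat.cast_pow, ← div_pow]
  have h2n : (0:ℝ) < (2 * n) ^ k := by positivity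
  set B : Fin m → Finset (Fin k → Fin n × Bool) :=
    fun t => univ.filter (fun w => ∀ l, σ t (w l).1 ≠ (w l).2) with hBdef
  -- card of a single bad set
  have hBt : ∀ t, ((B t).card : ℝ) = (n : ℝ) ^ k := by
    intro t
    have h1 : (univ.filter (fun p : Fin n × Bool => σ t p.1 ≠ p.2))
        = univ.image (fun i : Fin n => (i, !σ t i)) := by
      ext ⟨i, b⟩
      simp only [mem_filter, mem_univ, true_and, mem_image, Prod.mk.injEq]
      constructor
      · intro h
        refine ⟨i, rfl, ?_⟩
        revert h; cases σ t i <;> cases b <;> simp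
      · rintro ⟨a, rfl, rfl⟩
        cases σ t a <;> simp
    have h2 : Function.Injective (fun i : Fin n => (i, !σ t i)) := by
      intro a b h; exact congrArg Prod.fst h
    rw [hBdef]
    simp only
    rw [card_pi_filter (fun p : Fin n × Bool => σ t p.1 ≠ p.2), h1,
      Finset.card_image_of_injective _ h2, Fintype.card_fin, card_univ, Fintype.card_fin]
    push_cast
    try ring
  -- card of pairwise intersections of bad sets
  have hBtl : ∀ t l : Fin m, t ≠ l →
      (((B t) ∩ (B l)).card : ℝ) ≤ ((1 - β + η) * n) ^ k := by
    intro t l htl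
    have hinter : (B t) ∩ (B l) = univ.filter
        (fun w : Fin k → Fin n × Bool =>
          ∀ j, σ t (w j).1 ≠ (w j).2 ∧ σ l (w j).1 ≠ (w j).2) := by
      ext w
      simp only [hBdef, Finset.mem_inter, mem_filter, mem_univ, true_and, forall_and]
    have h1 : (univ.filter (fun p : Fin n × Bool => σ t p.1 ≠ p.2 ∧ σ l p.1 ≠ p.2))
        = (univ.filter (fun i : Fin n => σ t i = σ l i)).image
            (fun i : Fin n => (i, !σ t i)) := by
      ext ⟨i, b⟩
      simp only [mem_filter, mem_univ, true_and, mem_image, Prod.mk.injEq]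
      constructor
      · rintro ⟨hh1, hh2⟩
        refine ⟨i, ?_, rfl, ?_⟩
        · revert hh1 hh2; cases σ t i <;> cases σ l i <;> cases b <;> simp
        · revert hh1; cases σ t i <;> cases b <;> simp
      · rintro ⟨a, he, rfl, rfl⟩
        rw [← he]
        constructor <;> (cases σ t a <;> simp)
    have h2 : Function.Injective (fun i : Fin n => (i, !σ t i)) := by
      intro a b h; exact congrArg Prod.fst h
    have hagree : ((univ.filter (fun i : Fin n => σ t i = σ l i)).card : ℝ)
        ≤ (1 - β + η) * n := by
      have hsum : (univ.filter (fun i : Fin n => σ t i = σ l i)).card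
          + hammingDist (σ t) (σ l) = n := by
        have h := Finset.card_filter_add_card_filter_not
          (s := (univ : Finset (Fin n))) (p := fun i => σ t i = σ l i)
        simpa [hammingDist, card_univ] using h
      have hd := hdist t l htl
      have he : ((univ.filter (fun i : Fin n => σ t i = σ l i)).card : ℝ)
          = n - hammingDist (σ t) (σ l) := by
        have := congrArg (Nat.cast (R := ℝ)) hsum
        push_cast at this
        linarith
      rw [he]
      linarith
    have hcard : (((B t) ∩ (B l)).card : ℝ)
        = (((univ.filter (fun i : Fin n => σ t i = σ l i)).card : ℝ)) ^ k := by
      rw [hinter, card_pi_filter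
        (fun p : Fin n × Bool => σ t p.1 ≠ p.2 ∧ σ l p.1 ≠ p.2), h1,
        Finset.card_image_of_injective _ h2, Fintype.card_fin]
      push_cast
      try ring
    rw [hcard]
    exact pow_le_pow_left₀ (by positivity) hagree k
  -- good = total minus union of bad
  have hGB : ((univ.filter Q).card : ℝ)
      = ((2:ℝ) * n) ^ k - ((univ.biUnion B).card : ℝ) := by
    have hcompl : univ.filter (fun w => ¬ Q w) = univ.biUnion B := by
      ext w
      simp only [hQdef, hBdef, mem_filter, mem_univ, true_and, mem_biUnion,
        not_forall, not_exists]
    have h := Finset.card_filter_add_card_filter_not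
      (s := (univ : Finset (Fin k → Fin n × Bool))) (p := Q)
    rw [hcompl, card_univ] at h
    have hcardW : (Fintype.card (Fin k → Fin n × Bool) : ℝ) = ((2:ℝ) * n) ^ k := by
      rw [Fintype.card_fun, Fintype.card_prod, Fintype.card_fin, Fintype.card_bool,
        Fintype.card_fin]
      push_cast
      ring
    have h' := congrArg (Nat.cast (R := ℝ)) h
    push_cast at h'
    rw [hcardW] at h'
    linarith
  -- Bonferroni
  have hbon := bonferroni B (univ : Finset (Fin m))
  have hsingles : ∑ t ∈ (univ : Finset (Fin m)), ((B t).card : ℝ)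
      = m * (n : ℝ) ^ k := by
    rw [Finset.sum_congr rfl (fun t _ => hBt t), Finset.sum_const, card_univ,
      Fintype.card_fin, nsmul_eq_mul]
  have hpairs : ∑ p ∈ (univ : Finset (Fin m)).offDiag, (((B p.1) ∩ (B p.2)).card : ℝ)
      ≤ ((m : ℝ) * m - m) * ((1 - β + η) * n) ^ k := by
    calc ∑ p ∈ (univ : Finset (Fin m)).offDiag, (((B p.1) ∩ (B p.2)).card : ℝ)
        ≤ ∑ _p ∈ (univ : Finset (Fin m)).offDiag, ((1 - β + η) * n) ^ k := by
          apply Finset.sum_le_sum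
          rintro ⟨t, l⟩ hp
          rw [Finset.mem_offDiag] at hp
          exact hBtl t l hp.2.2
      _ = ((m : ℝ) * m - m) * ((1 - β + η) * n) ^ k := by
          rw [Finset.sum_const, nsmul_eq_mul, Finset.offDiag_card, card_univ,
            Fintype.card_fin]
          congr 1
          have hle : m ≤ m * m := by
            cases m with
            | zero => simp
            | succ p => exact Nat.le_mul_of_pos_left _ (Nat.succ_pos p)
          push_cast [Nat.cast_sub hle]
          ring
  rw [hsingles] at hbon
  -- single-clause probability bound
  have hsingle : ((univ.filter Q).card : ℝ)
      ≤ ((2:ℝ) * n) ^ k - m * (n:ℝ) ^ k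
        + (((m:ℝ) * m - m) / 2) * ((1 - β + η) * n) ^ k := by
    rw [hGB]
    linarith
  have hbase : ((2:ℝ) * n) ^ k - m * (n:ℝ) ^ k
        + (((m:ℝ) * m - m) / 2) * ((1 - β + η) * n) ^ k
      = (1 - m * (2 : ℝ) ^ (-(k : ℤ)) +
          (m * ((m:ℝ) - 1) / 2) * (1 - β + η) ^ k * (2 : ℝ) ^ (-(k : ℤ))) * ((2:ℝ)*n) ^ k := by
    have h2k : (2:ℝ) ^ (-(k:ℤ)) = ((2:ℝ) ^ k)⁻¹ := by
      rw [zpow_neg, zpow_natCast]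
    rw [h2k, mul_pow, mul_pow]
    have hk2 : (0:ℝ) < (2:ℝ)^k := by positivity
    field_simp
  rw [hbase] at hsingle
  have hfrac : ((univ.filter Q).card : ℝ) / ((2:ℝ) * n) ^ k
      ≤ 1 - m * (2 : ℝ) ^ (-(k : ℤ)) +
          (m * ((m:ℝ) - 1) / 2) * (1 - β + η) ^ k * (2 : ℝ) ^ (-(k : ℤ)) := by
    rw [div_le_iff₀ h2n]
    exact hsingle
  exact pow_le_pow_left₀ (by positivity) hfrac M
end
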